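/- Let w⁻_1, w⁻_2, w⁻_3 ∈ [0,1], set w⁺_e = 1 − w⁻_e and f⁻_e = w⁻_e, f⁺_e = 1 − f⁻_e. For all (x_1, x_2, x_3) ∈ [0,1]³ satisfying x_1 ≤ x_2 + x_3, x_2 ≤ x_3 + x_1, and x_3 ≤ x_1 + x_2, one has φ − 3·ψ ≤ 0, where φ = f⁺_3 f⁺_2 w⁻_1 + (f⁺_3 f⁻_2 + f⁻_3 f⁺_2) w⁺_1 + f⁺_1 f⁺_3 w⁻_2 + (f⁺_1 f⁻_3 + f⁻_1 f⁺_3) w⁺_2 + f⁺_2 f⁺_1 w⁻_3 + (f⁺_2 f⁻_1 + f⁻_2 f⁺_1) w⁺_3 and ψ = (f⁺_3 f⁺_2 + f⁺_3 f⁻_2 + f⁻_3 f⁺_2)(x_1 w⁺_1 + (1 − x_1) w⁻_1) + (f⁺_1 f⁺_3 + f⁺_1 f⁻_3 + f⁻_1 f⁺_3)(x_2 w⁺_2 + (1 − x_2) w⁻_2) + (f⁺_2 f⁺_1 + f⁺_2 f⁻_1 + f⁻_2 f⁺_1)(x_3 w⁺_3 + (1 − x_3) w⁻_3). -/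
import Mathlib


/-- With `w⁺ₑ = 1 − w⁻ₑ`, `f⁻ₑ = w⁻ₑ`, `f⁺ₑ = 1 − f⁻ₑ`, for all
`(x₁,x₂,x₃) ∈ [0,1]³` satisfying the triangle inequalities, `φ − 3·ψ ≤ 0`. -/
theorem phi_sub_three_psi_le_zero (w1 w2 w3 x1 x2 x3 : ℝ)
    (hw1 : w1 ∈ Set.Icc (0:ℝ) 1) (hw2 : w2 ∈ Set.Icc (0:ℝ) 1)
    (hw3 : w3 ∈ Set.Icc (0:ℝ) 1)
    (hx1 : x1 ∈ Set.Icc (0:ℝ) 1) (hx2 : x2 ∈ Set.Icc (0:ℝ) 1)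
    (hx3 : x3 ∈ Set.Icc (0:ℝ) 1)
    (ht1 : x1 ≤ x2 + x3) (ht2 : x2 ≤ x3 + x1) (ht3 : x3 ≤ x1 + x2) :
    ((1 - w3) * (1 - w2) * w1 + ((1 - w3) * w2 + w3 * (1 - w2)) * (1 - w1) +
     (1 - w1) * (1 - w3) * w2 + ((1 - w1) * w3 + w1 * (1 - w3)) * (1 - w2) +
     (1 - w2) * (1 - w1) * w3 + ((1 - w2) * w1 + w2 * (1 - w1)) * (1 - w3)) -
    3 * (((1 - w3) * (1 - w2) + (1 - w3) * w2 + w3 * (1 - w2)) *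
           (x1 * (1 - w1) + (1 - x1) * w1) +
         ((1 - w1) * (1 - w3) + (1 - w1) * w3 + w1 * (1 - w3)) *
           (x2 * (1 - w2) + (1 - x2) * w2) +
         ((1 - w2) * (1 - w1) + (1 - w2) * w1 + w2 * (1 - w1)) *
           (x3 * (1 - w3) + (1 - x3) * w3)) ≤ 0 := by
  obtain ⟨hw1a, hw1b⟩ := hw1
  obtain ⟨hw2a, hw2b⟩ := hw2
  obtain ⟨hw3a, hw3b⟩ := hw3
  obtain ⟨hx1a, hx1b⟩ := hx1
  obtain ⟨hx2a, hx2b⟩ := hx2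
  obtain ⟨hx3a, hx3b⟩ := hx3
  nlinarith [mul_nonneg (mul_nonneg (mul_nonneg (sub_nonneg.2 hx1b) hw1a) (sub_nonneg.2 hw2b)) hw3a,
    mul_nonneg (mul_nonneg (mul_nonneg (sub_nonneg.2 hx1b) hw1a) hw2a) (sub_nonneg.2 hw3b),
    mul_nonneg (mul_nonneg (mul_nonneg (sub_nonneg.2 hx2b) (sub_nonneg.2 hw1b)) hw2a) hw3a,
    mul_nonneg (mul_nonneg (mul_nonneg (sub_nonneg.2 hx2b) hw1a) hw2a) (sub_nonneg.2 hw3b),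
    mul_nonneg (mul_nonneg (mul_nonneg (sub_nonneg.2 hx3b) (sub_nonneg.2 hw1b)) hw2a) hw3a,
    mul_nonneg (mul_nonneg (mul_nonneg (sub_nonneg.2 hx3b) hw1a) (sub_nonneg.2 hw2b)) hw3a,
    mul_nonneg (mul_nonneg (sub_nonneg.2 ht1) (sub_nonneg.2 hw2b)) (sub_nonneg.2 hw3b),
    mul_nonneg (mul_nonneg (sub_nonneg.2 ht2) (sub_nonneg.2 hw1b)) (sub_nonneg.2 hw3b),
    mul_nonneg (mul_nonneg (sub_nonneg.2 ht3) (sub_nonneg.2 hw1b)) (sub_nonneg.2 hw2b)]
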